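/- If B_R is a P-justified revision of B_I, then B_R is an s-model of P; in particular B_R is a model of P. -/
import Mathlib


namespace ARP

variable (U T : Type*)

/-- Revision atoms: `(true, a)` is `in(a)`, `(false, a)` is `out(a)`. -/
abbrev RevAtom := Bool × U
/-- Annotated revision atoms `(l : α)`. -/
abbrev AnnAtom := (RevAtom U) × T
/-- An annotated revision rule: a head and a list of body atoms. -/
abbrev Rule := AnnAtom U T × List (AnnAtom U T)
/-- An annotated revision program: a set of rules. -/
abbrev Program := Set (Rule U T)
/-- T-valuations of revision atoms. -/
abbrev TVal := RevAtom U → T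
/-- T²-valuations of atoms, with the pointwise (knowledge) ordering. -/
abbrev Val := U → T × T

variable {U T} [CompleteDistribLattice T]

/-- A T-valuation satisfies `(l : α)` iff `v l ≥ α`. -/
def satA (v : TVal U T) (q : AnnAtom U T) : Prop := q.2 ≤ v q.1

/-- The bijection θ⁻¹ from T²-valuations to T-valuations. -/
def thetaInv (B : Val U T) : TVal U T := fun l => if l.1 then (B l.2).1 else (B l.2).2

/-- The van Emden-Kowalski style operator on T-valuations. -/
def TP (P : Program U T) (v : TVal U T) : TVal U T :=
  fun l => sSup {α | ∃ r ∈ P, r.1 = (l, α) ∧ ∀ q ∈ r.2, satA v q}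

/-- The operator `T_P^b = θ ∘ T_P ∘ θ⁻¹` on T²-valuations. -/
def TPb (P : Program U T) (B : Val U T) : Val U T :=
  fun a => (TP P (thetaInv B) (true, a), TP P (thetaInv B) (false, a))

/-- Conflation on T², relative to a De Morgan complement `c` on T. -/
def conf (c : T → T) (p : T × T) : T × T := (c p.2, c p.1)

/-- Conflation extended pointwise to T²-valuations. -/
def confV (c : T → T) (B : Val U T) : Val U T := fun a => conf c (B a)

/-- `B` is a model of `P`: it satisfies every rule of `P`. -/
def isModel (P : Program U T) (B : Val U T) : Prop :=
  ∀ r ∈ P, (∀ q ∈ r.2, satA (thetaInv B) q) → satA (thetaInv B) r.1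

/-- `B` is an s-model of `P`. -/
def isSModel (c : T → T) (P : Program U T) (B : Val U T) : Prop :=
  TPb P B ≤ B ∧ B ≤ TPb P B ⊔ confV c (TPb P B)

/-- The relative pseudocomplement: the least `γ` with `α ⊔ γ ≥ β`. -/
def pcomp (α β : T) : T := sInf {γ | β ≤ α ⊔ γ}

/-- The reduct `P_{B_R}|B_I`. -/
def reduct (P : Program U T) (BR BI : Val U T) : Program U T :=
  { r' | ∃ r ∈ P, (∀ q ∈ r.2, satA (thetaInv BR) q) ∧
      r' = (r.1, r.2.map (fun q => (q.1, pcomp (thetaInv BI q.1) q.2))) }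

/-- The necessary change: the least (pre)fixpoint of `T_P^b`. -/
def NC (P : Program U T) : Val U T := sInf {B | TPb P B ≤ B}

/-- A T²-valuation is consistent if `B ≤ₖ -B`. -/
def consistentVal (c : T → T) (B : Val U T) : Prop := B ≤ confV c B

/-- `B_R` is a `P`-justified revision of `B_I`. -/
def JRev (c : T → T) (P : Program U T) (BI BR : Val U T) : Prop :=
  BR = (BI ⊓ confV c (NC (reduct P BR BI))) ⊔ NC (reduct P BR BI)

end ARP

section Aux
open ARP
variable {U T : Type*} [CompleteDistribLattice T]

lemma thetaInv_mono {B1 B2 : Val U T} (h : B1 ≤ B2) : thetaInv B1 ≤ thetaInv B2 := by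
  intro l
  rcases l with ⟨b, a⟩
  cases b <;> simp [thetaInv] <;> [exact (h a).2; exact (h a).1]

lemma TP_mono (P : Program U T) {v1 v2 : TVal U T} (h : v1 ≤ v2) : TP P v1 ≤ TP P v2 := by
  intro l
  apply sSup_le_sSup
  rintro α ⟨r, hrP, hhead, hbody⟩
  exact ⟨r, hrP, hhead, fun q hq => le_trans (hbody q hq) (h q.1)⟩

lemma TPb_mono (P : Program U T) {B1 B2 : Val U T} (h : B1 ≤ B2) : TPb P B1 ≤ TPb P B2 := by
  intro a
  exact ⟨TP_mono P (thetaInv_mono h) _, TP_mono P (thetaInv_mono h) _⟩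

lemma NC_prefix (Q : Program U T) : TPb Q (NC Q) ≤ NC Q := by
  apply le_sInf
  intro B hB
  exact le_trans (TPb_mono Q (sInf_le hB)) hB

lemma NC_fixed (Q : Program U T) : TPb Q (NC Q) = NC Q :=
  le_antisymm (NC_prefix Q) (sInf_le (TPb_mono Q (NC_prefix Q)))

lemma thetaInv_TPb (P : Program U T) (B : Val U T) :
    thetaInv (TPb P B) = TP P (thetaInv B) := by
  funext l
  rcases l with ⟨b, a⟩
  cases b <;> rfl

lemma thetaInv_sup (A B : Val U T) (l : RevAtom U) :
    thetaInv (A ⊔ B) l = thetaInv A l ⊔ thetaInv B l := by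
  rcases l with ⟨b, a⟩; cases b <;> rfl

lemma key_lemma (c : T → T) (P : Program U T) (BI BR : Val U T)
    (h : JRev c P BI BR) :
    TPb P BR = NC (reduct P BR BI) := by
  set Q := reduct P BR BI with hQ
  set C := NC Q with hC
  have hfix : TPb Q C = C := NC_fixed Q
  have hle : TP P (thetaInv BR) ≤ thetaInv C := by
    intro l
    apply sSup_le
    rintro α ⟨r, hrP, hhead, hbody⟩
    have hr' : (r.1, r.2.map (fun q => (q.1, pcomp (thetaInv BI q.1) q.2))) ∈ Q :=
      ⟨r, hrP, hbody, rfl⟩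
    have hbody' : ∀ q ∈ r.2.map (fun q => (q.1, pcomp (thetaInv BI q.1) q.2)),
        satA (thetaInv C) q := by
      intro q' hq'
      rw [List.mem_map] at hq'
      rcases hq' with ⟨q, hq, rfl⟩
      -- satA: pcomp (thetaInv BI q.1) q.2 ≤ thetaInv C q.1
      have h1 : q.2 ≤ thetaInv BR q.1 := hbody q hq
      have h2 : thetaInv BR q.1 ≤ thetaInv BI q.1 ⊔ thetaInv C q.1 := by
        conv_lhs => rw [h]
        rw [thetaInv_sup]
        apply sup_le_sup_right
        exact le_trans (thetaInv_mono inf_le_left q.1) le_rfl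
      exact sInf_le (le_trans h1 h2)
    have : α ≤ TP Q (thetaInv C) l :=
      le_sSup ⟨_, hr', by simpa using hhead, hbody'⟩
    calc α ≤ TP Q (thetaInv C) l := this
      _ = thetaInv (TPb Q C) l := by rw [thetaInv_TPb]
      _ = thetaInv C l := by rw [hfix]
  have hge : C ≤ TPb P BR := by
    apply sInf_le
    show TPb Q (TPb P BR) ≤ TPb P BR
    intro a
    constructor <;>
    · apply sSup_le
      rintro α ⟨r', hr'Q, hhead, _⟩
      rcases hr'Q with ⟨r, hrP, hbody, rfl⟩
      exact le_sSup ⟨r, hrP, by simpa using hhead, hbody⟩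
  apply le_antisymm
  · intro a
    refine ⟨?_, ?_⟩
    · exact hle (true, a)
    · exact hle (false, a)
  · exact hge

end Aux

theorem jrev_isSModel {U T : Type*} [CompleteDistribLattice T]
    (c : T → T)
    (hinv : ∀ a, c (c a) = a)
    (hdm1 : ∀ a b : T, c (a ⊔ b) = c a ⊓ c b)
    (hdm2 : ∀ a b : T, c (a ⊓ b) = c a ⊔ c b)
    (P : ARP.Program U T) (BI BR : ARP.Val U T)
    (h : ARP.JRev c P BI BR) :
    ARP.isSModel c P BR ∧ ARP.isModel P BR :=  by
  have hkey := key_lemma c P BI BR h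
  have hJ := h
  unfold ARP.JRev at hJ
  rw [← hkey] at hJ
  have h1 : ARP.TPb P BR ≤ BR := by
    conv_rhs => rw [hJ]
    exact le_sup_right
  have h2 : BR ≤ ARP.TPb P BR ⊔ ARP.confV c (ARP.TPb P BR) := by
    conv_lhs => rw [hJ]
    exact sup_le (le_trans inf_le_right le_sup_right) le_sup_left
  refine ⟨⟨h1, h2⟩, ?_⟩
  intro r hr hbody
  show r.1.2 ≤ ARP.thetaInv BR r.1.1
  have : r.1.2 ≤ ARP.TP P (ARP.thetaInv BR) r.1.1 :=
    le_sSup ⟨r, hr, by rw [Prod.mk.eta], hbody⟩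
  calc r.1.2 ≤ ARP.TP P (ARP.thetaInv BR) r.1.1 := this
    _ = ARP.thetaInv (ARP.TPb P BR) r.1.1 := by rw [thetaInv_TPb]
    _ ≤ ARP.thetaInv BR r.1.1 := thetaInv_mono h1 _
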